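/- Let d ≥ 1, p ≥ 2, v ∈ ℝ^d a unit vector and t > 0. Then for every z, w ∈ ℝ^d one has (F_{v,t}(z) − F_{v,t}(w)) · (z − w) ≥ (4/p²) · ‖H_{v,t}(z) − H_{v,t}(w)‖². -/

import Mathlib

/-- `F_{v,t}(z) = (z·v − t)₊^{p−1} v`, where `s₊ = max(s,0)`. -/
noncomputable def Fvt {d : ℕ} (p : ℝ) (v : EuclideanSpace ℝ (Fin d)) (t : ℝ)
    (z : EuclideanSpace ℝ (Fin d)) : EuclideanSpace ℝ (Fin d) :=
  (max ((inner ℝ z v : ℝ) - t) 0) ^ (p - 1) • v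

/-- `H_{v,t}(z) = (z·v − t)₊^{p/2} v`, where `s₊ = max(s,0)`. -/
noncomputable def Hvt {d : ℕ} (p : ℝ) (v : EuclideanSpace ℝ (Fin d)) (t : ℝ)
    (z : EuclideanSpace ℝ (Fin d)) : EuclideanSpace ℝ (Fin d) :=
  (max ((inner ℝ z v : ℝ) - t) 0) ^ (p / 2) • v

/-- Key scalar inequality: for `0 ≤ b ≤ a` and `p ≥ 2`,
`(4/p²)(a^{p/2} − b^{p/2})² ≤ (a^{p−1} − b^{p−1})(a − b)`. -/
lemma key_scalar {p a b : ℝ} (hp : 2 ≤ p) (hb : 0 ≤ b) (hab : b ≤ a) :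
    (4 / p ^ 2) * (a ^ (p / 2) - b ^ (p / 2)) ^ 2 ≤
      (a ^ (p - 1) - b ^ (p - 1)) * (a - b) := by
  have hp0 : (0 : ℝ) < p := by linarith
  have ha : 0 ≤ a := hb.trans hab
  rcases eq_or_lt_of_le ha with ha0 | ha0
  · -- a = 0 hence b = 0
    have hb0 : b = 0 := le_antisymm (hab.trans ha0.symm.le) hb
    rw [← ha0, hb0]
    simp [Real.zero_rpow (by positivity : p / 2 ≠ 0),
      Real.zero_rpow (by intro h; nlinarith : p - 1 ≠ 0)]
  -- now 0 < a
  have hane : a ≠ 0 := ne_of_gt ha0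
  -- Step A : a^(p/2) - b^(p/2) ≤ (p/2) * a^(p/2-1) * (a-b)
  have hs : (-1 : ℝ) ≤ b / a - 1 := by
    have : 0 ≤ b / a := div_nonneg hb ha
    linarith
  have hBern := one_add_mul_self_le_rpow_one_add hs (by linarith : (1:ℝ) ≤ p / 2)
  rw [show 1 + (b / a - 1) = b / a by ring] at hBern
  rw [Real.div_rpow hb ha] at hBern
  have hA2 : (0 : ℝ) < a ^ (p / 2) := Real.rpow_pos_of_pos ha0 _
  have hBern2 := mul_le_mul_of_nonneg_right hBern hA2.le
  rw [div_mul_cancel₀ _ (ne_of_gt hA2)] at hBern2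
  have e1 : (b / a - 1) * a ^ (p / 2) = (b - a) * a ^ (p / 2 - 1) := by
    rw [Real.rpow_sub_one hane]
    field_simp
  have stepA : a ^ (p / 2) - b ^ (p / 2) ≤ p / 2 * a ^ (p / 2 - 1) * (a - b) := by
    nlinarith [hBern2, e1]
  -- Step B : square it
  have hq : b ^ (p / 2) ≤ a ^ (p / 2) := Real.rpow_le_rpow hb hab (by positivity)
  have stepB : (a ^ (p / 2) - b ^ (p / 2)) ^ 2 ≤
      (p / 2 * a ^ (p / 2 - 1) * (a - b)) ^ 2 := by
    apply pow_le_pow_left₀ (by linarith) stepA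
  have e2 : a ^ (p / 2 - 1) * a ^ (p / 2 - 1) = a ^ (p - 2) := by
    rw [← Real.rpow_add ha0]; ring_nf
  -- Step C : a^(p-2) * (a-b) ≤ a^(p-1) - b^(p-1)
  have e3 : a ^ (p - 1) = a ^ (p - 2) * a := by
    rw [show p - 1 = p - 2 + 1 by ring, Real.rpow_add_one hane]
  have hb' : b ^ (p - 1) = b ^ (p - 2) * b := by
    rcases eq_or_lt_of_le hb with hb0 | hb0
    · rw [← hb0, Real.zero_rpow (by intro h; nlinarith : p - 1 ≠ 0), mul_zero]
    · rw [show p - 1 = p - 2 + 1 by ring, Real.rpow_add_one (ne_of_gt hb0)]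
  have hmono : b ^ (p - 2) ≤ a ^ (p - 2) := Real.rpow_le_rpow hb hab (by linarith)
  have stepC : a ^ (p - 2) * (a - b) ≤ a ^ (p - 1) - b ^ (p - 1) := by
    have : b ^ (p - 2) * b ≤ a ^ (p - 2) * b := mul_le_mul_of_nonneg_right hmono hb
    nlinarith [e3, hb']
  -- combine
  have hab' : 0 ≤ a - b := by linarith
  have hApos : (0 : ℝ) ≤ a ^ (p - 2) := Real.rpow_nonneg ha _
  have combC : a ^ (p - 2) * (a - b) * (a - b) ≤ (a ^ (p - 1) - b ^ (p - 1)) * (a - b) :=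
    mul_le_mul_of_nonneg_right stepC hab'
  have expand : (p / 2 * a ^ (p / 2 - 1) * (a - b)) ^ 2 =
      p ^ 2 / 4 * (a ^ (p - 2) * (a - b) * (a - b)) := by
    rw [← e2]; ring
  have final : (a ^ (p / 2) - b ^ (p / 2)) ^ 2 ≤
      p ^ 2 / 4 * ((a ^ (p - 1) - b ^ (p - 1)) * (a - b)) := by
    calc (a ^ (p / 2) - b ^ (p / 2)) ^ 2 ≤ (p / 2 * a ^ (p / 2 - 1) * (a - b)) ^ 2 := stepB
      _ = p ^ 2 / 4 * (a ^ (p - 2) * (a - b) * (a - b)) := expand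
      _ ≤ p ^ 2 / 4 * ((a ^ (p - 1) - b ^ (p - 1)) * (a - b)) := by
          apply mul_le_mul_of_nonneg_left combC (by positivity)
  have hp2 : (0 : ℝ) < p ^ 2 := by positivity
  calc 4 / p ^ 2 * (a ^ (p / 2) - b ^ (p / 2)) ^ 2
      ≤ 4 / p ^ 2 * (p ^ 2 / 4 * ((a ^ (p - 1) - b ^ (p - 1)) * (a - b))) := by
        apply mul_le_mul_of_nonneg_left final (by positivity)
    _ = (a ^ (p - 1) - b ^ (p - 1)) * (a - b) := by field_simp
  
/-- Scalar version with the truncation, assuming `y ≤ x`. -/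
lemma scalar_aux {p t x y : ℝ} (hp : 2 ≤ p) (hxy : y ≤ x) :
    (4 / p ^ 2) * ((max (x - t) 0) ^ (p / 2) - (max (y - t) 0) ^ (p / 2)) ^ 2 ≤
      ((max (x - t) 0) ^ (p - 1) - (max (y - t) 0) ^ (p - 1)) * (x - y) := by
  set a := max (x - t) 0 with hadef
  set b := max (y - t) 0 with hbdef
  have hb : 0 ≤ b := le_max_right _ _
  have hab : b ≤ a := max_le_max (by linarith) le_rfl
  have hdiff : a - b ≤ x - y := by
    have h1 : x - t ≤ b + (x - y) := by
      have := le_max_left (y - t) 0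
      simp only [← hbdef] at this; linarith
    have h2 : (0 : ℝ) ≤ b + (x - y) := by linarith
    have := max_le h1 h2
    simp only [← hadef] at this; linarith
  have hpow : b ^ (p - 1) ≤ a ^ (p - 1) := Real.rpow_le_rpow hb hab (by linarith)
  calc (4 / p ^ 2) * (a ^ (p / 2) - b ^ (p / 2)) ^ 2
      ≤ (a ^ (p - 1) - b ^ (p - 1)) * (a - b) := key_scalar hp hb hab
    _ ≤ (a ^ (p - 1) - b ^ (p - 1)) * (x - y) :=
        mul_le_mul_of_nonneg_left hdiff (by linarith)

lemma scalar_main {p t x y : ℝ} (hp : 2 ≤ p) :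
    (4 / p ^ 2) * ((max (x - t) 0) ^ (p / 2) - (max (y - t) 0) ^ (p / 2)) ^ 2 ≤
      ((max (x - t) 0) ^ (p - 1) - (max (y - t) 0) ^ (p - 1)) * (x - y) := by
  rcases le_total y x with h | h
  · exact scalar_aux hp h
  · have := scalar_aux hp h (t := t)
    nlinarith [this]

/-- for `p ≥ 2`, `v` a unit vector and `t > 0`, for all `z, w ∈ ℝ^d`,
`(F(z) − F(w)) · (z − w) ≥ (4/p²) ‖H(z) − H(w)‖²`. -/
theorem stmt_3 {d : ℕ} (hd : 1 ≤ d) (p : ℝ) (hp : 2 ≤ p)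
    (v : EuclideanSpace ℝ (Fin d)) (hv : ‖v‖ = 1) (t : ℝ) (ht : 0 < t)
    (z w : EuclideanSpace ℝ (Fin d)) :
    (inner ℝ (Fvt p v t z - Fvt p v t w) (z - w) : ℝ) ≥
      (4 / p ^ 2) * ‖Hvt p v t z - Hvt p v t w‖ ^ 2 := by
  set x : ℝ := inner ℝ z v with hx
  set y : ℝ := inner ℝ w v with hy
  have hF : Fvt p v t z - Fvt p v t w =
      ((max (x - t) 0) ^ (p - 1) - (max (y - t) 0) ^ (p - 1)) • v := by
    rw [Fvt, Fvt, sub_smul, ← hx, ← hy]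
  have hH : Hvt p v t z - Hvt p v t w =
      ((max (x - t) 0) ^ (p / 2) - (max (y - t) 0) ^ (p / 2)) • v := by
    rw [Hvt, Hvt, sub_smul, ← hx, ← hy]
  have hinner : (inner ℝ (Fvt p v t z - Fvt p v t w) (z - w) : ℝ) =
      ((max (x - t) 0) ^ (p - 1) - (max (y - t) 0) ^ (p - 1)) * (x - y) := by
    have hvz : (inner ℝ v z : ℝ) = x := by rw [hx]; exact real_inner_comm z v
    have hvw : (inner ℝ v w : ℝ) = y := by rw [hy]; exact real_inner_comm w v
    rw [hF, real_inner_smul_left, inner_sub_right, hvz, hvw]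
  have hnorm : ‖Hvt p v t z - Hvt p v t w‖ ^ 2 =
      ((max (x - t) 0) ^ (p / 2) - (max (y - t) 0) ^ (p / 2)) ^ 2 := by
    rw [hH, norm_smul, hv, mul_one, Real.norm_eq_abs, sq_abs]
  rw [hinner, hnorm, ge_iff_le]
  exact scalar_main hp
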